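/- Let φ : [0,1] → ℝ be Lipschitz continuous. Then for every n ≥ 1, k ≥ 1 and every probability vector P = (p_1,…,p_k), if N = (N_1,…,N_k) ~ Multinomial(n, P), then Var[Σ_{i=1}^k φ(N_i/n)] ≤ ‖φ‖²_{C^{0,1}}/n. -/

import Mathlib

open scoped BigOperators ENNReal
open MeasureTheory

noncomputable section

/-- `φ` has `ℓ`th divergence speed `p^α`: `φ ∈ C^ℓ` and there are constants
`W > 0`, `c, c' ≥ 0` with `W p^{α-ℓ} - c' ≤ |φ^{(ℓ)}(p)| ≤ W p^{α-ℓ} + c` on `(0,1)`. -/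
def HasDivergenceSpeed (ℓ : ℕ) (α : ℝ) (φ : ℝ → ℝ) : Prop :=
  ContDiff ℝ ℓ φ ∧
  ∃ W c c' : ℝ, 0 < W ∧ 0 ≤ c ∧ 0 ≤ c' ∧
    ∀ p ∈ Set.Ioo (0:ℝ) 1,
      W * p ^ (α - (ℓ : ℝ)) - c' ≤ |iteratedDeriv ℓ φ p| ∧
      |iteratedDeriv ℓ φ p| ≤ W * p ^ (α - (ℓ : ℝ)) + c

/-- Multinomial probability of the histogram `N` for `n` samples from `P`. -/
def mWeight (n : ℕ) {k : ℕ} (P : Fin k → ℝ) (N : Fin k → ℕ) : ℝ :=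
  if (∑ i, N i) = n then
    (n.factorial : ℝ) / (∏ i, ((N i).factorial : ℝ)) * ∏ i, P i ^ (N i)
  else 0

/-- Expectation of `f(N)` for `N ~ Multinomial(n, P)`. -/
def mExp (n : ℕ) {k : ℕ} (P : Fin k → ℝ) (f : (Fin k → ℕ) → ℝ) : ℝ :=
  ∑' N : Fin k → ℕ, mWeight n P N * f N

/-- Variance of `f(N)` for `N ~ Multinomial(n, P)`. -/
def mVar (n : ℕ) {k : ℕ} (P : Fin k → ℝ) (f : (Fin k → ℕ) → ℝ) : ℝ :=
  mExp n P fun N => (f N - mExp n P f) ^ 2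

/-- The probability simplex `M_k`. -/
def probVec (k : ℕ) : Set (Fin k → ℝ) := {P | (∀ i, 0 ≤ P i) ∧ ∑ i, P i = 1}

/-- The minimax quadratic risk `R*(n, k; φ)` for estimating `θ(P) = ∑ i, φ (p i)`
from a multinomial histogram. -/
def minimaxRisk (n k : ℕ) (φ : ℝ → ℝ) : ℝ :=
  ⨅ est : (Fin k → ℕ) → ℝ, ⨆ P : probVec k,
    mExp n P.1 fun N => (est N - ∑ i, φ (P.1 i)) ^ 2

/-- Poisson probability mass function with mean `μ`. -/
def poissonP (μ : ℝ) (m : ℕ) : ℝ := Real.exp (-μ) * μ ^ m / (m.factorial : ℝ)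

/-- Expectation of `g(Ñ)` for `Ñ ~ Poisson(μ)`. -/
def poisExp (μ : ℝ) (g : ℕ → ℝ) : ℝ := ∑' m : ℕ, poissonP μ m * g m

/-- Variance of `g(Ñ)` for `Ñ ~ Poisson(μ)`. -/
def poisVar (μ : ℝ) (g : ℕ → ℝ) : ℝ := ∑' m : ℕ, poissonP μ m * (g m - poisExp μ g) ^ 2

/-- Expectation (in `ℝ≥0∞`) of a nonnegative `f(Ñ)` where `Ñ` has independent
coordinates `Ñ i ~ Poisson(μ i)`. -/
def pExp {k : ℕ} (μ : Fin k → ℝ) (f : (Fin k → ℕ) → ℝ) : ℝ≥0∞ :=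
  ∑' N : Fin k → ℕ, ENNReal.ofReal ((∏ i, poissonP (μ i) (N i)) * f N)

/-- The Poissonized minimax risk `R̃*(m, k; φ)`. -/
def poissonRisk (m : ℝ) (k : ℕ) (φ : ℝ → ℝ) : ℝ≥0∞ :=
  ⨅ est : (Fin k → ℕ) → ℝ, ⨆ P : probVec k,
    pExp (fun i => m * P.1 i) (fun N => (est N - ∑ i, φ (P.1 i)) ^ 2)

/-- The approximate probability vectors `M_k(ε)`. -/
def approxProbVec (k : ℕ) (ε : ℝ) : Set (Fin k → ℝ) :=
  {P | (∀ i, 0 ≤ P i) ∧ |(∑ i, P i) - 1| ≤ ε}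

/-- The approximated Poissonized minimax risk `R̃*(m, k, ε; φ)`. -/
def approxPoissonRisk (m : ℝ) (k : ℕ) (ε : ℝ) (φ : ℝ → ℝ) : ℝ≥0∞ :=
  ⨅ est : (Fin k → ℕ) → ℝ, ⨆ P : approxProbVec k ε,
    pExp (fun i => m * P.1 i) (fun N => (est N - ∑ i, φ (P.1 i)) ^ 2)

/-- The Hölder norm `‖f‖_{C^{0,β}}` of `f` on `[0,1]` (as an infimum of admissible
Hölder constants). -/
def holderNorm (β : ℝ) (f : ℝ → ℝ) : ℝ :=
  sInf {K : ℝ | 0 ≤ K ∧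
    ∀ x ∈ Set.Icc (0:ℝ) 1, ∀ y ∈ Set.Icc (0:ℝ) 1, |f x - f y| ≤ K * |x - y| ^ β}

/-- The best uniform approximation error `E_L(f, [a,b])` by polynomials of degree `≤ L`. -/
def bestPolyError (L : ℕ) (f : ℝ → ℝ) (a b : ℝ) : ℝ :=
  sInf {e : ℝ | ∃ g : Polynomial ℝ, g.natDegree ≤ L ∧
    e = sSup ((fun x => |f x - g.eval x|) '' Set.Icc a b)}

/-- Bernstein basis polynomial `B_{ν,n}(x)`. -/
def bernB (ν n : ℕ) (x : ℝ) : ℝ := (n.choose ν : ℝ) * x ^ ν * (1 - x) ^ (n - ν)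

/-- The generalized Hermite interpolation `H_L(p; φ, a, b)`. -/
def hermiteInterp (L : ℕ) (φ : ℝ → ℝ) (a b p : ℝ) : ℝ :=
  φ a + ∑ m ∈ Finset.Icc 1 L,
    (iteratedDeriv m φ a / (m.factorial : ℝ)) * (p - a) ^ m *
      ∑ s ∈ Finset.range (L - m + 1),
        ((L + 1 : ℝ) / (L + s + 1 : ℝ)) * bernB s (L + s + 1) ((p - a) / (b - a))

/-- The smoothed function `H_{L,Δ}[φ]`. -/
def HSmooth (L : ℕ) (Δ : ℝ) (φ : ℝ → ℝ) (p : ℝ) : ℝ :=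
  if p ≤ Δ / 2 then hermiteInterp L φ Δ (Δ / 2) (Δ / 2)
  else if p < Δ then hermiteInterp L φ Δ (Δ / 2) p
  else if p ≤ 1 then φ p
  else if p < 2 then hermiteInterp L φ 1 2 p
  else hermiteInterp L φ 1 2 2

/-- The fourth-order bias-corrected function `φ̄_{4,Δ}`. -/
def phiBar4 (n : ℕ) (Δ : ℝ) (φ : ℝ → ℝ) (p : ℝ) : ℝ :=
  HSmooth 6 Δ φ p
    - p / (2 * (n : ℝ)) * iteratedDeriv 2 (HSmooth 6 Δ φ) p
    - 2 * p / (3 * (n : ℝ) ^ 2) * iteratedDeriv 3 (HSmooth 6 Δ φ) p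
    - 7 * p / (24 * (n : ℝ) ^ 3) * iteratedDeriv 4 (HSmooth 6 Δ φ) p
    - 3 * p ^ 2 / (8 * (n : ℝ) ^ 2) * iteratedDeriv 4 (HSmooth 6 Δ φ) p

/-- First-order modulus of smoothness of `f` on `[-1,1]`. -/
def modulus1 (f : ℝ → ℝ) (t : ℝ) : ℝ :=
  sSup {d : ℝ | ∃ x ∈ Set.Icc (-1:ℝ) 1, ∃ y ∈ Set.Icc (-1:ℝ) 1, |x - y| ≤ t ∧ d = |f x - f y|}

/-- Second-order modulus of smoothness of `f` on `[0,1]`. -/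
def modulus2 (f : ℝ → ℝ) (t : ℝ) : ℝ :=
  sSup {d : ℝ | ∃ x ∈ Set.Icc (0:ℝ) 1, ∃ y ∈ Set.Icc (0:ℝ) 1,
    |x - y| ≤ 2 * t ∧ d = |f x + f y - 2 * f ((x + y) / 2)|}

namespace VarPluginAux

variable {k : ℕ}

/-- Finite-sum version of the multinomial expectation. -/
def Ef (P : Fin k → ℝ) (n : ℕ) (f : (Fin k → ℕ) → ℝ) : ℝ :=
  ∑ N ∈ Finset.Nat.antidiagonalTuple k n, mWeight n P N * f N

lemma mWeight_eq_zero {P : Fin k → ℝ} {n : ℕ} {N : Fin k → ℕ}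
    (h : (∑ i, N i) ≠ n) : mWeight n P N = 0 := by
  simp [mWeight, h]

lemma mExp_eq (P : Fin k → ℝ) (n : ℕ) (f : (Fin k → ℕ) → ℝ) :
    mExp n P f = Ef P n f := by
  refine tsum_eq_sum ?_
  intro N hN
  rw [Finset.Nat.mem_antidiagonalTuple] at hN
  rw [mWeight_eq_zero hN, zero_mul]

lemma mWeight_nonneg {P : Fin k → ℝ} (hP : ∀ i, 0 ≤ P i) (n : ℕ) (N : Fin k → ℕ) :
    0 ≤ mWeight n P N := by
  unfold mWeight
  split
  · refine mul_nonneg (div_nonneg (by positivity) ?_) ?_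
    · exact Finset.prod_nonneg fun i _ => by positivity
    · exact Finset.prod_nonneg fun i _ => pow_nonneg (hP i) _
  · exact le_refl 0

lemma Ef_congr {P : Fin k → ℝ} {n : ℕ} {f g : (Fin k → ℕ) → ℝ}
    (h : ∀ N, (∑ i, N i) = n → f N = g N) : Ef P n f = Ef P n g := by
  refine Finset.sum_congr rfl fun N hN => ?_
  rw [Finset.Nat.mem_antidiagonalTuple] at hN
  rw [h N hN]

lemma Ef_mono {P : Fin k → ℝ} (hP : ∀ i, 0 ≤ P i) {n : ℕ} {f g : (Fin k → ℕ) → ℝ}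
    (h : ∀ N, (∑ i, N i) = n → f N ≤ g N) : Ef P n f ≤ Ef P n g := by
  refine Finset.sum_le_sum fun N hN => ?_
  rw [Finset.Nat.mem_antidiagonalTuple] at hN
  exact mul_le_mul_of_nonneg_left (h N hN) (mWeight_nonneg hP n N)

lemma Ef_add (P : Fin k → ℝ) (n : ℕ) (f g : (Fin k → ℕ) → ℝ) :
    Ef P n (fun N => f N + g N) = Ef P n f + Ef P n g := by
  simp [Ef, mul_add, Finset.sum_add_distrib]

lemma Ef_const_mul (P : Fin k → ℝ) (n : ℕ) (a : ℝ) (f : (Fin k → ℕ) → ℝ) :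
    Ef P n (fun N => a * f N) = a * Ef P n f := by
  simp [Ef, Finset.mul_sum, mul_left_comm]

/-- Increment the `i`-th coordinate. -/
def addOne (M : Fin k → ℕ) (i : Fin k) : Fin k → ℕ := fun j => M j + if j = i then 1 else 0

/-- Decrement the `i`-th coordinate. -/
def subOne (N : Fin k → ℕ) (i : Fin k) : Fin k → ℕ := fun j => N j - if j = i then 1 else 0

lemma addOne_apply_self (M : Fin k → ℕ) (i : Fin k) : addOne M i i = M i + 1 := by
  simp [addOne]

lemma addOne_apply_ne (M : Fin k → ℕ) {i j : Fin k} (h : j ≠ i) : addOne M i j = M j := by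
  simp [addOne, h]

lemma sum_addOne (M : Fin k → ℕ) (i : Fin k) : ∑ j, addOne M i j = (∑ j, M j) + 1 := by
  simp [addOne, Finset.sum_add_distrib]

lemma subOne_addOne (M : Fin k → ℕ) (i : Fin k) : subOne (addOne M i) i = M := by
  funext j
  by_cases h : j = i <;> simp [addOne, subOne, h]

lemma addOne_subOne {N : Fin k → ℕ} {i : Fin k} (h : N i ≠ 0) : addOne (subOne N i) i = N := by
  funext j
  by_cases hj : j = i <;> simp [addOne, subOne, hj] <;> omega

lemma subOne_eq_self {N : Fin k → ℕ} {i : Fin k} (h : N i = 0) : subOne N i = N := by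
  funext j
  by_cases hj : j = i <;> simp [subOne, hj] <;> omega

lemma sum_subOne {N : Fin k → ℕ} {i : Fin k} (h : N i ≠ 0) :
    (∑ j, subOne N i j) + 1 = ∑ j, N j := by
  conv_rhs => rw [← addOne_subOne h]
  rw [sum_addOne]

lemma addOne_comm (M : Fin k → ℕ) (i j : Fin k) :
    addOne (addOne M i) j = addOne (addOne M j) i := by
  funext x
  simp [addOne]
  omega

/-- Key combinatorial identity for the multinomial weights. -/
lemma weight_step (P : Fin k → ℝ) {n : ℕ} {N : Fin k → ℕ} (hN : ∑ i, N i = n + 1) :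
    ∑ i, P i * mWeight n P (subOne N i) = mWeight (n + 1) P N := by
  have key : ∀ i, P i * mWeight n P (subOne N i)
      = (N i : ℝ) * (((n.factorial : ℝ) / (∏ j, ((N j).factorial : ℝ))) * ∏ j, P j ^ N j) := by
    intro i
    by_cases h0 : N i = 0
    · rw [subOne_eq_self h0, mWeight_eq_zero (by omega), h0]
      simp
    · have hsum : ∑ j, subOne N i j = n := by
        have := sum_subOne (N := N) (i := i) h0
        omega
      have hfact : (N i) * ∏ j, ((subOne N i j).factorial) = ∏ j, (N j).factorial := by
        rw [← Finset.mul_prod_erase Finset.univ _ (Finset.mem_univ i),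
            ← Finset.mul_prod_erase Finset.univ (fun j => (N j).factorial) (Finset.mem_univ i),
            ← mul_assoc]
        have h1 : subOne N i i = N i - 1 := by simp [subOne]
        rw [h1, Nat.mul_factorial_pred h0]
        congr 1
        refine Finset.prod_congr rfl fun j hj => ?_
        have : j ≠ i := (Finset.mem_erase.mp hj).1
        simp [subOne, this]
      have hpow : P i * ∏ j, P j ^ (subOne N i j) = ∏ j, P j ^ N j := by
        rw [← Finset.mul_prod_erase Finset.univ (fun j => P j ^ subOne N i j) (Finset.mem_univ i),
            ← Finset.mul_prod_erase Finset.univ (fun j => P j ^ N j) (Finset.mem_univ i),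
            ← mul_assoc]
        have h1 : subOne N i i = N i - 1 := by simp [subOne]
        have h2 : N i - 1 + 1 = N i := Nat.succ_pred_eq_of_pos (Nat.pos_of_ne_zero h0)
        rw [h1, ← pow_succ', h2]
        congr 1
        refine Finset.prod_congr rfl fun j hj => ?_
        have : j ≠ i := (Finset.mem_erase.mp hj).1
        simp [subOne, this]
      have hfactR : (N i : ℝ) * ∏ j, ((subOne N i j).factorial : ℝ) = ∏ j, ((N j).factorial : ℝ) := by
        exact_mod_cast hfact
      have hne1 : (∏ j, ((subOne N i j).factorial : ℝ)) ≠ 0 := by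
        refine Finset.prod_ne_zero_iff.mpr fun j _ => ?_
        positivity
      have hne2 : (∏ j, ((N j).factorial : ℝ)) ≠ 0 := by
        refine Finset.prod_ne_zero_iff.mpr fun j _ => ?_
        positivity
      rw [mWeight, if_pos hsum]
      rw [← hpow, ← hfactR]
      field_simp
  rw [Finset.sum_congr rfl fun i _ => key i, ← Finset.sum_mul]
  rw [mWeight, if_pos hN]
  have : (∑ i, (N i : ℝ)) = (n : ℝ) + 1 := by exact_mod_cast hN
  rw [this, Nat.factorial_succ]
  push_cast
  field_simp

/-- Reindexing a sum over histograms of mass `n` shifted by one in coordinate `i`. -/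
lemma sum_reindex (P : Fin k → ℝ) (n : ℕ) (i : Fin k) (F : (Fin k → ℕ) → ℝ) :
    ∑ M ∈ Finset.Nat.antidiagonalTuple k n, mWeight n P M * (P i * F (addOne M i))
      = ∑ N ∈ Finset.Nat.antidiagonalTuple k (n + 1),
          (P i * mWeight n P (subOne N i)) * F N := by
  have hzero : ∀ N ∈ Finset.Nat.antidiagonalTuple k (n + 1),
      N ∉ (Finset.Nat.antidiagonalTuple k (n + 1)).filter (fun N => N i ≠ 0) →
      (P i * mWeight n P (subOne N i)) * F N = 0 := by
    intro N hN hN'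
    have h0 : N i = 0 := by
      by_contra h
      exact hN' (Finset.mem_filter.mpr ⟨hN, h⟩)
    rw [Finset.Nat.mem_antidiagonalTuple] at hN
    rw [subOne_eq_self h0, mWeight_eq_zero (by omega)]
    ring
  rw [← Finset.sum_subset (Finset.filter_subset _ _) hzero]
  refine Finset.sum_bij' (fun M _ => addOne M i) (fun N _ => subOne N i) ?_ ?_ ?_ ?_ ?_
  · intro M hM
    rw [Finset.Nat.mem_antidiagonalTuple] at hM
    refine Finset.mem_filter.mpr ⟨?_, ?_⟩
    · rw [Finset.Nat.mem_antidiagonalTuple, sum_addOne, hM]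
    · rw [addOne_apply_self]; omega
  · intro N hN
    obtain ⟨hN, h0⟩ := Finset.mem_filter.mp hN
    rw [Finset.Nat.mem_antidiagonalTuple] at hN ⊢
    have := sum_subOne (N := N) (i := i) h0
    omega
  · intro M _
    exact subOne_addOne M i
  · intro N hN
    exact addOne_subOne (Finset.mem_filter.mp hN).2
  · intro M _
    rw [subOne_addOne]
    ring

/-- One-step recursion: peeling off one multinomial sample. -/
lemma Ef_succ (P : Fin k → ℝ) (n : ℕ) (h : (Fin k → ℕ) → ℝ) :
    Ef P (n + 1) h = Ef P n (fun M => ∑ i, P i * h (addOne M i)) := by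
  unfold Ef
  calc ∑ N ∈ Finset.Nat.antidiagonalTuple k (n + 1), mWeight (n + 1) P N * h N
      = ∑ N ∈ Finset.Nat.antidiagonalTuple k (n + 1),
          ∑ i, (P i * mWeight n P (subOne N i)) * h N := by
        refine Finset.sum_congr rfl fun N hN => ?_
        rw [Finset.Nat.mem_antidiagonalTuple] at hN
        rw [← weight_step P hN, Finset.sum_mul]
    _ = ∑ i, ∑ N ∈ Finset.Nat.antidiagonalTuple k (n + 1),
          (P i * mWeight n P (subOne N i)) * h N := Finset.sum_comm
    _ = ∑ i, ∑ M ∈ Finset.Nat.antidiagonalTuple k n,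
          mWeight n P M * (P i * h (addOne M i)) := by
        exact Finset.sum_congr rfl fun i _ => (sum_reindex P n i h).symm
    _ = ∑ M ∈ Finset.Nat.antidiagonalTuple k n,
          ∑ i, mWeight n P M * (P i * h (addOne M i)) := Finset.sum_comm
    _ = ∑ M ∈ Finset.Nat.antidiagonalTuple k n,
          mWeight n P M * ∑ i, P i * h (addOne M i) := by
        exact Finset.sum_congr rfl fun M _ => (Finset.mul_sum _ _ _).symm

lemma Ef_zero (P : Fin k → ℝ) (f : (Fin k → ℕ) → ℝ) : Ef P 0 f = f 0 := by
  rw [Ef, Finset.Nat.antidiagonalTuple_zero_right, Finset.sum_singleton]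
  have : mWeight 0 P 0 = 1 := by simp [mWeight]
  rw [this, one_mul]

lemma Ef_one {P : Fin k → ℝ} (hP1 : ∑ i, P i = 1) :
    ∀ n : ℕ, Ef P n (fun _ => 1) = 1
  | 0 => by rw [Ef_zero]
  | n + 1 => by
      rw [Ef_succ]
      have : Ef P n (fun M => ∑ i, P i * 1) = Ef P n (fun _ => 1) := by
        refine Ef_congr fun N _ => ?_
        simp [hP1]
      rw [this, Ef_one hP1 n]

lemma Ef_const {P : Fin k → ℝ} (hP1 : ∑ i, P i = 1) (n : ℕ) (a : ℝ) :
    Ef P n (fun _ => a) = a := by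
  have : Ef P n (fun _ => a * 1) = a * Ef P n (fun _ => 1) := Ef_const_mul P n a _
  simpa [Ef_one hP1 n] using this

lemma Ef_var_eq {P : Fin k → ℝ} (hP1 : ∑ i, P i = 1) (n : ℕ) (f : (Fin k → ℕ) → ℝ) :
    Ef P n (fun N => (f N - Ef P n f) ^ 2)
      = Ef P n (fun N => f N ^ 2) - (Ef P n f) ^ 2 := by
  set a := Ef P n f with ha
  have h1 : Ef P n (fun N => (f N - a) ^ 2)
      = Ef P n (fun N => f N ^ 2 + ((-2 * a) * f N + a ^ 2)) := by
    refine Ef_congr fun N _ => ?_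
    ring
  rw [h1, Ef_add, Ef_add, Ef_const_mul, Ef_const hP1]
  ring

/-- Variance of a finitely-supported random variable with values in an interval
of length `c` is at most `c²/4`. -/
lemma weighted_var_le {P : Fin k → ℝ} (hP : ∀ i, 0 ≤ P i) (hP1 : ∑ i, P i = 1)
    (hk : 0 < k) (v : Fin k → ℝ) {c : ℝ} (hv : ∀ i j, |v i - v j| ≤ c) :
    (∑ i, P i * v i ^ 2) - (∑ i, P i * v i) ^ 2 ≤ c ^ 2 / 4 := by
  have hne : (Finset.univ : Finset (Fin k)).Nonempty := ⟨⟨0, hk⟩, Finset.mem_univ _⟩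
  obtain ⟨jM, _, hjM⟩ := Finset.exists_max_image Finset.univ v hne
  obtain ⟨jm, _, hjm⟩ := Finset.exists_min_image Finset.univ v hne
  set a := (v jM + v jm) / 2 with ha
  have hc : v jM - v jm ≤ c := le_trans (le_abs_self _) (hv jM jm)
  have habs : ∀ i, (v i - a) ^ 2 ≤ (c / 2) ^ 2 := by
    intro i
    have h1 := hjM i (Finset.mem_univ i)
    have h2 := hjm i (Finset.mem_univ i)
    have : |v i - a| ≤ c / 2 := by
      rw [abs_le]
      constructor <;> [linarith; linarith]
    calc (v i - a) ^ 2 = |v i - a| ^ 2 := by rw [sq_abs]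
      _ ≤ (c / 2) ^ 2 := by
          have h0 : (0 : ℝ) ≤ |v i - a| := abs_nonneg _
          nlinarith
  have e1 : ∑ i, P i * (v i - a) ^ 2
      = (∑ i, P i * v i ^ 2) - 2 * a * (∑ i, P i * v i) + a ^ 2 := by
    have : ∀ i, P i * (v i - a) ^ 2
        = P i * v i ^ 2 - 2 * a * (P i * v i) + a ^ 2 * P i := fun i => by ring
    rw [Finset.sum_congr rfl fun i _ => this i]
    rw [Finset.sum_add_distrib, Finset.sum_sub_distrib, ← Finset.mul_sum, ← Finset.mul_sum, hP1]
    ring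
  have e2 : (∑ i, P i * v i ^ 2) - (∑ i, P i * v i) ^ 2
      = (∑ i, P i * (v i - a) ^ 2) - ((∑ i, P i * v i) - a) ^ 2 := by
    rw [e1]; ring
  have e3 : ∑ i, P i * (v i - a) ^ 2 ≤ ∑ i, P i * ((c / 2) ^ 2) := by
    exact Finset.sum_le_sum fun i _ => mul_le_mul_of_nonneg_left (habs i) (hP i)
  have e4 : ∑ i, P i * ((c / 2) ^ 2) = (c / 2) ^ 2 := by
    rw [← Finset.sum_mul, hP1, one_mul]
  have e5 : (0 : ℝ) ≤ ((∑ i, P i * v i) - a) ^ 2 := sq_nonneg _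
  rw [e2]
  nlinarith

/-- Efron–Stein style bound for the multinomial by induction on `n`. -/
lemma var_bound {P : Fin k → ℝ} (hP : ∀ i, 0 ≤ P i) (hP1 : ∑ i, P i = 1) (hk : 0 < k)
    {c : ℝ} (hc : 0 ≤ c) :
    ∀ (n : ℕ) (h : (Fin k → ℕ) → ℝ),
      (∀ M i i', |h (addOne M i) - h (addOne M i')| ≤ c) →
      Ef P n (fun N => h N ^ 2) - (Ef P n h) ^ 2 ≤ (n : ℝ) * c ^ 2 / 4
  | 0, h, _ => by
      rw [Ef_zero, Ef_zero]
      simp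
  | n + 1, h, hBD => by
      rw [Ef_succ P n h, Ef_succ P n (fun N => h N ^ 2)]
      set g := fun M => ∑ i, P i * h (addOne M i) with hg
      have hgBD : ∀ M i i', |g (addOne M i) - g (addOne M i')| ≤ c := by
        intro M i i'
        have e : ∀ j, g (addOne M j)
            = ∑ x, P x * h (addOne (addOne M x) j) := by
          intro j
          refine Finset.sum_congr rfl fun x _ => ?_
          rw [addOne_comm M j x]
        rw [e i, e i', ← Finset.sum_sub_distrib]
        have : ∀ x, P x * h (addOne (addOne M x) i) - P x * h (addOne (addOne M x) i')
            = P x * (h (addOne (addOne M x) i) - h (addOne (addOne M x) i')) := fun x => by ring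
        rw [Finset.sum_congr rfl fun x _ => this x]
        calc |∑ x, P x * (h (addOne (addOne M x) i) - h (addOne (addOne M x) i'))|
            ≤ ∑ x, |P x * (h (addOne (addOne M x) i) - h (addOne (addOne M x) i'))| :=
              Finset.abs_sum_le_sum_abs _ _
          _ ≤ ∑ x, P x * c := by
              refine Finset.sum_le_sum fun x _ => ?_
              rw [abs_mul, abs_of_nonneg (hP x)]
              exact mul_le_mul_of_nonneg_left (hBD (addOne M x) i i') (hP x)
          _ = c := by rw [← Finset.sum_mul, hP1, one_mul]
      have IH := var_bound hP hP1 hk hc n g hgBD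
      have hpt : ∀ M, (∑ i, P i * h (addOne M i) ^ 2) - g M ^ 2 ≤ c ^ 2 / 4 := by
        intro M
        exact weighted_var_le hP hP1 hk (fun i => h (addOne M i)) (fun i j => hBD M i j)
      have hsplit : Ef P n (fun M => ∑ i, P i * h (addOne M i) ^ 2)
          = Ef P n (fun M => (∑ i, P i * h (addOne M i) ^ 2) - g M ^ 2)
            + Ef P n (fun M => g M ^ 2) := by
        rw [← Ef_add]
        refine Ef_congr fun N _ => ?_
        ring
      have hb1 : Ef P n (fun M => (∑ i, P i * h (addOne M i) ^ 2) - g M ^ 2) ≤ c ^ 2 / 4 := by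
        calc Ef P n (fun M => (∑ i, P i * h (addOne M i) ^ 2) - g M ^ 2)
            ≤ Ef P n (fun _ => c ^ 2 / 4) := Ef_mono hP fun N _ => hpt N
          _ = c ^ 2 / 4 := Ef_const hP1 n _
      have : Ef P n (fun M => ∑ i, P i * h (addOne M i) ^ 2) - (Ef P n g) ^ 2
          ≤ c ^ 2 / 4 + (Ef P n (fun M => g M ^ 2) - (Ef P n g) ^ 2) := by
        rw [hsplit]; linarith
      refine le_trans this ?_
      push_cast
      linarith

end VarPluginAux

/-- variance of the plugin estimator for a Lipschitz `φ`. -/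
theorem variance_plugin_lipschitz
    (φ : ℝ → ℝ)
    (hLip : ∃ K : ℝ, 0 ≤ K ∧ ∀ x ∈ Set.Icc (0:ℝ) 1, ∀ y ∈ Set.Icc (0:ℝ) 1,
        |φ x - φ y| ≤ K * |x - y| ^ (1 : ℝ)) :
    ∀ (n k : ℕ), 1 ≤ n → 1 ≤ k → ∀ P : Fin k → ℝ, P ∈ probVec k →
      mVar n P (fun N => ∑ i, φ ((N i : ℝ) / (n : ℝ)))
        ≤ (holderNorm 1 φ) ^ 2 / (n : ℝ) := by
  classical
  intro n k hn hk P hP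
  obtain ⟨hPnn, hP1⟩ := hP
  set K := holderNorm 1 φ with hKdef
  set S := {K : ℝ | 0 ≤ K ∧
    ∀ x ∈ Set.Icc (0:ℝ) 1, ∀ y ∈ Set.Icc (0:ℝ) 1, |φ x - φ y| ≤ K * |x - y| ^ (1:ℝ)} with hSdef
  have hSne : S.Nonempty := hLip
  have hSbdd : BddBelow S := ⟨0, fun b hb => hb.1⟩
  have hK0 : 0 ≤ K := le_csInf hSne fun b hb => hb.1
  have hKlip : ∀ x ∈ Set.Icc (0:ℝ) 1, ∀ y ∈ Set.Icc (0:ℝ) 1, |φ x - φ y| ≤ K * |x - y| := by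
    intro x hx y hy
    rcases eq_or_ne x y with rfl | hxy
    · simp [mul_nonneg hK0 (abs_nonneg _)]
    · have hd : 0 < |x - y| := abs_pos.mpr (sub_ne_zero.mpr hxy)
      rw [← div_le_iff₀ hd]
      refine le_csInf hSne fun b hb => ?_
      rw [div_le_iff₀ hd]
      have := hb.2 x hx y hy
      rwa [Real.rpow_one] at this
  have hn0 : (0 : ℝ) < (n : ℝ) := by exact_mod_cast hn
  set c : ℝ := 2 * K / n with hc
  have hc0 : 0 ≤ c := by positivity
  -- clamped plugin function, globally of bounded differences
  set f : (Fin k → ℕ) → ℝ := fun N => ∑ i, φ ((N i : ℝ) / (n : ℝ)) with hf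
  set f' : (Fin k → ℕ) → ℝ := fun N => ∑ i, φ ((min (N i) n : ℝ) / (n : ℝ)) with hf'
  have hmem : ∀ x : ℝ, 0 ≤ x → (min x (n : ℝ) / (n : ℝ)) ∈ Set.Icc (0:ℝ) 1 := by
    intro x hx
    constructor
    · have : 0 ≤ min x (n : ℝ) := le_min hx hn0.le
      positivity
    · rw [div_le_one hn0]
      exact min_le_right _ _
  have hstep : ∀ x : ℝ, 0 ≤ x →
      |φ (min (x + 1) (n : ℝ) / n) - φ (min x (n : ℝ) / n)| ≤ K / n := by
    intro x hx
    refine le_trans (hKlip _ (hmem (x + 1) (by linarith)) _ (hmem x hx)) ?_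
    rw [div_sub_div_same, abs_div, abs_of_pos hn0]
    have h1 : min x (n : ℝ) ≤ min (x + 1) (n : ℝ) := min_le_min (by linarith) le_rfl
    have h2 : min (x + 1) (n : ℝ) ≤ min x (n : ℝ) + 1 := by
      rcases le_total x (n : ℝ) with h | h
      · rw [min_eq_left h]
        exact (min_le_left _ _).trans (by linarith)
      · rw [min_eq_right h, min_eq_right (by linarith)]
        linarith
    have habs : |min (x + 1) (n : ℝ) - min x (n : ℝ)| ≤ 1 := by
      rw [abs_of_nonneg (by linarith)]
      linarith
    calc K * (|min (x + 1) (n : ℝ) - min x (n : ℝ)| / ↑n)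
        = K * |min (x + 1) (n : ℝ) - min x (n : ℝ)| / ↑n := by ring
      _ ≤ K / ↑n := by
          gcongr
          nlinarith [abs_nonneg (min (x + 1) (n : ℝ) - min x (n : ℝ))]
  have hBD : ∀ M i i', |f' (VarPluginAux.addOne M i) - f' (VarPluginAux.addOne M i')| ≤ c := by
    intro M i i'
    rcases eq_or_ne i i' with rfl | hii
    · simpa using hc0
    · have ht : ∀ j : Fin k, j ∉ ({i, i'} : Finset (Fin k)) →
          φ ((min (VarPluginAux.addOne M i j) n : ℝ) / n)
            - φ ((min (VarPluginAux.addOne M i' j) n : ℝ) / n) = 0 := by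
        intro j hj
        simp only [Finset.mem_insert, Finset.mem_singleton, not_or] at hj
        rw [VarPluginAux.addOne_apply_ne M hj.1, VarPluginAux.addOne_apply_ne M hj.2, sub_self]
      have hsum : f' (VarPluginAux.addOne M i) - f' (VarPluginAux.addOne M i')
          = ∑ j, (φ ((min (VarPluginAux.addOne M i j) n : ℝ) / n)
              - φ ((min (VarPluginAux.addOne M i' j) n : ℝ) / n)) := by
        simp only [hf', Finset.sum_sub_distrib]
      rw [hsum, ← Finset.sum_subset (Finset.subset_univ ({i, i'} : Finset (Fin k)))
        (fun j _ hj => ht j hj), Finset.sum_pair hii]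
      have hti : |φ ((min (VarPluginAux.addOne M i i) n : ℝ) / n)
          - φ ((min (VarPluginAux.addOne M i' i) n : ℝ) / n)| ≤ K / n := by
        rw [VarPluginAux.addOne_apply_self, VarPluginAux.addOne_apply_ne M hii]
        push_cast
        exact hstep (M i : ℝ) (by positivity)
      have hti' : |φ ((min (VarPluginAux.addOne M i i') n : ℝ) / n)
          - φ ((min (VarPluginAux.addOne M i' i') n : ℝ) / n)| ≤ K / n := by
        rw [VarPluginAux.addOne_apply_self, VarPluginAux.addOne_apply_ne M (Ne.symm hii), abs_sub_comm]
        push_cast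
        exact hstep (M i' : ℝ) (by positivity)
      calc |_ + _| ≤ _ + _ := abs_add_le _ _
        _ ≤ K / n + K / n := add_le_add hti hti'
        _ = c := by rw [hc]; ring
  -- reduce mVar to the finite expectation Ef
  have hcongr : ∀ N : Fin k → ℕ, (∑ i, N i) = n → f N = f' N := by
    intro N hN
    refine Finset.sum_congr rfl fun i _ => ?_
    have : N i ≤ n := hN ▸ Finset.single_le_sum (f := fun j => N j) (fun j _ => Nat.zero_le _)
      (Finset.mem_univ i)
    rw [min_eq_left (by exact_mod_cast this : ((N i : ℝ)) ≤ (n : ℝ))]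
  have hEff : VarPluginAux.Ef P n f = VarPluginAux.Ef P n f' := VarPluginAux.Ef_congr hcongr
  have hmvar : mVar n P f
      = VarPluginAux.Ef P n (fun N => f' N ^ 2) - (VarPluginAux.Ef P n f') ^ 2 := by
    rw [mVar, VarPluginAux.mExp_eq, VarPluginAux.mExp_eq, hEff]
    rw [VarPluginAux.Ef_congr (g := fun N => (f' N - VarPluginAux.Ef P n f') ^ 2)
      (fun N hN => by rw [hcongr N hN])]
    exact VarPluginAux.Ef_var_eq hP1 n f'
  have hbound := VarPluginAux.var_bound hPnn hP1 (by omega : 0 < k) hc0 n f' hBD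
  have hfinal : (n : ℝ) * c ^ 2 / 4 = K ^ 2 / n := by
    rw [hc]
    field_simp
    ring
  rw [hmvar]
  rw [← hfinal]
  exact hbound
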